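/- Let K_{r,s} be a complete bipartite graph with parts R = {v_1, ..., v_r} and S, where s > r > 1. For any total matching T of K_{r,s}, the lifted inequality holds: (s − r + 1)·x_{v_1} + Σ_{i=2}^{r} x_{v_i} + Σ_{w ∈ S} x_w + Σ_{e ∈ E} y_e ≤ s, where (x, y) is the characteristic vector of T. -/

import Mathlib

/-- A total matching of `G`, given by its vertex part `S` and edge part `M`:
all elements pairwise non-adjacent. -/
def IsTotalMatching {V : Type*} (G : SimpleGraph V) (S : Finset V) (M : Finset (Sym2 V)) : Prop :=
  (∀ e ∈ M, e ∈ G.edgeSet) ∧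
  (∀ u ∈ S, ∀ v ∈ S, ¬ G.Adj u v) ∧
  (∀ e ∈ M, ∀ f ∈ M, e ≠ f → ∀ v : V, ¬ (v ∈ e ∧ v ∈ f)) ∧
  (∀ v ∈ S, ∀ e ∈ M, v ∉ e)

/-- The total matching number ν_T(G). -/
noncomputable def totalMatchingNumber {V : Type*} (G : SimpleGraph V) : ℕ :=
  sSup {n | ∃ S M, IsTotalMatching G S M ∧ S.card + M.card = n}


noncomputable def leftEnd {V W : Type*} (e : Sym2 (V ⊕ W)) : V ⊕ W :=
  if (Quot.out e).1.isLeft then (Quot.out e).1 else (Quot.out e).2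

noncomputable def rightEnd {V W : Type*} (e : Sym2 (V ⊕ W)) : V ⊕ W :=
  if (Quot.out e).1.isRight then (Quot.out e).1 else (Quot.out e).2

lemma leftEnd_eq {V W : Type*} (i : V) (j : W) :
    leftEnd (s(Sum.inl i, Sum.inr j)) = Sum.inl i := by
  unfold leftEnd
  have h : Quot.mk (Sym2.Rel (V ⊕ W)) (Quot.out (s(Sum.inl i, Sum.inr j) : Sym2 (V ⊕ W)))
      = s(Sum.inl i, Sum.inr j) := Quot.out_eq _
  set p := Quot.out (s(Sum.inl i, Sum.inr j) : Sym2 (V ⊕ W)) with hp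
  have hp2 : s(p.1, p.2) = s(Sum.inl i, Sum.inr j) := by exact h
  rcases Sym2.eq_iff.mp hp2 with ⟨h1, h2⟩ | ⟨h1, h2⟩ <;> simp [h1, h2]

lemma rightEnd_eq {V W : Type*} (i : V) (j : W) :
    rightEnd (s(Sum.inl i, Sum.inr j)) = Sum.inr j := by
  unfold rightEnd
  have h : Quot.mk (Sym2.Rel (V ⊕ W)) (Quot.out (s(Sum.inl i, Sum.inr j) : Sym2 (V ⊕ W)))
      = s(Sum.inl i, Sum.inr j) := Quot.out_eq _
  set p := Quot.out (s(Sum.inl i, Sum.inr j) : Sym2 (V ⊕ W)) with hp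
  have hp2 : s(p.1, p.2) = s(Sum.inl i, Sum.inr j) := by exact h
  rcases Sym2.eq_iff.mp hp2 with ⟨h1, h2⟩ | ⟨h1, h2⟩ <;> simp [h1, h2]

lemma edge_form {V W : Type*} {e : Sym2 (V ⊕ W)}
    (he : e ∈ (completeBipartiteGraph V W).edgeSet) :
    ∃ i j, e = s(Sum.inl i, Sum.inr j) := by
  induction e using Sym2.ind with
  | _ a b =>
    rw [SimpleGraph.mem_edgeSet] at he
    rcases he with ⟨ha, hb⟩ | ⟨ha, hb⟩
    · obtain ⟨i, rfl⟩ := Sum.isLeft_iff.mp ha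
      obtain ⟨j, rfl⟩ := Sum.isRight_iff.mp hb
      exact ⟨i, j, rfl⟩
    · obtain ⟨j, rfl⟩ := Sum.isRight_iff.mp ha
      obtain ⟨i, rfl⟩ := Sum.isLeft_iff.mp hb
      exact ⟨i, j, Sym2.eq_swap⟩

lemma count_left {r s : ℕ} (S : Finset (Fin r ⊕ Fin s)) (M : Finset (Sym2 (Fin r ⊕ Fin s)))
    (h : IsTotalMatching (completeBipartiteGraph (Fin r) (Fin s)) S M)
    (hS : ∀ v ∈ S, v.isLeft) : S.card + M.card ≤ r := by
  classical
  obtain ⟨hM, _, hMM, hSM⟩ := h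
  have key := Finset.card_le_card_of_injOn (f := Sum.elim id leftEnd)
    (s := S.disjSum M) (t := (Finset.univ : Finset (Fin r)).image Sum.inl) ?_ ?_
  · rwa [Finset.card_disjSum, Finset.card_image_of_injective _ Sum.inl_injective,
      Finset.card_univ, Fintype.card_fin] at key
  · intro x hx
    rcases Finset.mem_disjSum.mp hx with ⟨v, hv, rfl⟩ | ⟨e, he, rfl⟩
    · obtain ⟨i, rfl⟩ := Sum.isLeft_iff.mp (hS v hv)
      simp
    · obtain ⟨i, j, rfl⟩ := edge_form (hM e he)
      simp [leftEnd_eq]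
  · intro x hx y hy hxy
    rcases Finset.mem_disjSum.mp hx with ⟨v, hv, rfl⟩ | ⟨e, he, rfl⟩ <;>
      rcases Finset.mem_disjSum.mp hy with ⟨w, hw, rfl⟩ | ⟨f, hf, rfl⟩
    · simpa using hxy
    · obtain ⟨i, j, rfl⟩ := edge_form (hM f hf)
      simp only [Sum.elim_inl, Sum.elim_inr, id_eq, leftEnd_eq] at hxy
      exact absurd (by rw [hxy]; simp) (hSM v hv _ hf)
    · obtain ⟨i, j, rfl⟩ := edge_form (hM e he)
      simp only [Sum.elim_inl, Sum.elim_inr, id_eq, leftEnd_eq] at hxy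
      exact absurd (by rw [← hxy]; simp) (hSM w hw _ he)
    · by_contra hne
      have hne' : e ≠ f := by simpa using hne
      obtain ⟨i, j, rfl⟩ := edge_form (hM e he)
      obtain ⟨i', j', rfl⟩ := edge_form (hM f hf)
      simp only [Sum.elim_inr, leftEnd_eq] at hxy
      exact hMM _ he _ hf hne' (Sum.inl i) ⟨by simp, by rw [hxy]; simp⟩

lemma count_right {r s : ℕ} (S : Finset (Fin r ⊕ Fin s)) (M : Finset (Sym2 (Fin r ⊕ Fin s)))
    (h : IsTotalMatching (completeBipartiteGraph (Fin r) (Fin s)) S M)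
    (hS : ∀ v ∈ S, v.isRight) : S.card + M.card ≤ s := by
  classical
  obtain ⟨hM, _, hMM, hSM⟩ := h
  have key := Finset.card_le_card_of_injOn (f := Sum.elim id rightEnd)
    (s := S.disjSum M) (t := (Finset.univ : Finset (Fin s)).image Sum.inr) ?_ ?_
  · rwa [Finset.card_disjSum, Finset.card_image_of_injective _ Sum.inr_injective,
      Finset.card_univ, Fintype.card_fin] at key
  · intro x hx
    rcases Finset.mem_disjSum.mp hx with ⟨v, hv, rfl⟩ | ⟨e, he, rfl⟩
    · obtain ⟨j, rfl⟩ := Sum.isRight_iff.mp (hS v hv)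
      simp
    · obtain ⟨i, j, rfl⟩ := edge_form (hM e he)
      simp [rightEnd_eq]
  · intro x hx y hy hxy
    rcases Finset.mem_disjSum.mp hx with ⟨v, hv, rfl⟩ | ⟨e, he, rfl⟩ <;>
      rcases Finset.mem_disjSum.mp hy with ⟨w, hw, rfl⟩ | ⟨f, hf, rfl⟩
    · simpa using hxy
    · obtain ⟨i, j, rfl⟩ := edge_form (hM f hf)
      simp only [Sum.elim_inl, Sum.elim_inr, id_eq, rightEnd_eq] at hxy
      exact absurd (by rw [hxy]; simp) (hSM v hv _ hf)
    · obtain ⟨i, j, rfl⟩ := edge_form (hM e he)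
      simp only [Sum.elim_inl, Sum.elim_inr, id_eq, rightEnd_eq] at hxy
      exact absurd (by rw [← hxy]; simp) (hSM w hw _ he)
    · by_contra hne
      have hne' : e ≠ f := by simpa using hne
      obtain ⟨i, j, rfl⟩ := edge_form (hM e he)
      obtain ⟨i', j', rfl⟩ := edge_form (hM f hf)
      simp only [Sum.elim_inr, rightEnd_eq] at hxy
      exact hMM _ he _ hf hne' (Sum.inr j) ⟨by simp, by rw [hxy]; simp⟩
/-- The non-balanced lifted biclique inequality
`(s-r+1)·x_{v₁} + Σ_{i≥2} x_{v_i} + Σ_{w∈S} x_w + Σ_e y_e ≤ s` is valid for every total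
matching of `K_{r,s}` (`s > r > 1`). -/
theorem lifted_biclique_inequality (r s : ℕ) (hr : 1 < r) (hrs : r < s) (v₁ : Fin r)
    (S : Finset (Fin r ⊕ Fin s)) (M : Finset (Sym2 (Fin r ⊕ Fin s)))
    (h : IsTotalMatching (completeBipartiteGraph (Fin r) (Fin s)) S M) :
    (s - r + 1) * (if Sum.inl v₁ ∈ S then 1 else 0) + (S.erase (Sum.inl v₁)).card + M.card
      ≤ s := by
  classical
  have hadj : ∀ (i : Fin r) (j : Fin s),
      (completeBipartiteGraph (Fin r) (Fin s)).Adj (Sum.inl i) (Sum.inr j) := by simp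
  by_cases hv : Sum.inl v₁ ∈ S
  · have hleft : ∀ v ∈ S, v.isLeft := by
      intro v hvS
      rcases v with i | j
      · rfl
      · exact absurd (hadj v₁ j) (h.2.1 _ hv _ hvS)
    have hc := count_left S M h hleft
    have h1 : 1 ≤ S.card := Finset.card_pos.mpr ⟨_, hv⟩
    rw [if_pos hv, Finset.card_erase_of_mem hv]
    omega
  · rw [if_neg hv, Finset.erase_eq_of_notMem hv]
    simp only [mul_zero, zero_add]
    by_cases hl : ∃ v ∈ S, v.isLeft
    · obtain ⟨v, hvS, hvl⟩ := hl
      obtain ⟨i, rfl⟩ := Sum.isLeft_iff.mp hvl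
      have hleft : ∀ w ∈ S, w.isLeft := by
        intro w hwS
        rcases w with i' | j
        · rfl
        · exact absurd (hadj i j) (h.2.1 _ hvS _ hwS)
      have := count_left S M h hleft
      omega
    · push_neg at hl
      have hright : ∀ v ∈ S, v.isRight := by
        intro v hvS
        rcases v with i | j
        · exact absurd (hl _ hvS) (by simp)
        · rfl
      exact count_right S M h hright
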